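/- For any instance I of RAO (time budget T, articles with lengths t_i, hints h_i, and information rates c_i with codomain contained in [h_i]), the optimal value of the fractional Knapsack Problem for Hints (items with value t_i·h_i, weight t_i, capacity T) is at least the optimal offline value of RAO. -/

import Mathlib

/-- For any RAO instance (budget `T`, lengths `t`, hints `h`,
information rates `c` with `c i j ≤ h i`), the optimal value `vK` of the fractional
Knapsack Problem for Hints (values `t i * h i`, weights `t i`, capacity `T`)
is at least the value of any feasible offline RAO solution, hence at least the
RAO offline optimum. -/
theorem rao_le_kph (n T : ℕ) (t h : Fin n → ℕ) (c : Fin n → ℕ → ℕ)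
    (hc : ∀ i j, c i j ≤ h i)
    (vK : ℝ)
    (hK : IsLUB {v : ℝ | ∃ y : Fin n → ℝ, (∀ i, y i ∈ Set.Icc (0:ℝ) 1) ∧
            (∑ i, (t i : ℝ) * y i) ≤ T ∧ v = ∑ i, (t i : ℝ) * (h i : ℝ) * y i} vK)
    (τ : Fin n → ℕ) (hτ : ∀ i, τ i ≤ t i) (hT : ∑ i, τ i ≤ T) :
    (∑ i, ∑ j ∈ Finset.Icc 1 (τ i), (c i j : ℝ)) ≤ vK := by
  set y : Fin n → ℝ := fun i => if t i = 0 then 0 else (τ i : ℝ) / (t i : ℝ) with hy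
  have hty : ∀ i, (t i : ℝ) * y i = (τ i : ℝ) := by
    intro i
    by_cases ht : t i = 0
    · have : τ i = 0 := Nat.le_zero.mp (ht ▸ hτ i)
      simp [hy, ht, this]
    · have : (t i : ℝ) ≠ 0 := Nat.cast_ne_zero.mpr ht
      simp only [hy, if_neg ht]
      field_simp
  have hmem : (∑ i, (τ i : ℝ) * (h i : ℝ)) ∈ {v : ℝ | ∃ y : Fin n → ℝ,
      (∀ i, y i ∈ Set.Icc (0:ℝ) 1) ∧ (∑ i, (t i : ℝ) * y i) ≤ T ∧
      v = ∑ i, (t i : ℝ) * (h i : ℝ) * y i} := by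
    refine ⟨y, ?_, ?_, ?_⟩
    · intro i
      by_cases ht : t i = 0
      · simp [hy, ht]
      · have htpos : (0:ℝ) < t i := by positivity
        constructor
        · simp only [hy, if_neg ht]
          positivity
        · simp only [hy, if_neg ht]
          rw [div_le_one htpos]
          exact_mod_cast hτ i
    · calc ∑ i, (t i : ℝ) * y i = ∑ i, (τ i : ℝ) := by
            exact Finset.sum_congr rfl fun i _ => hty i
        _ = ((∑ i, τ i : ℕ) : ℝ) := by push_cast; ring
        _ ≤ T := by exact_mod_cast hT
    · refine Finset.sum_congr rfl fun i _ => ?_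
      rw [mul_right_comm, hty i]
  have hle : (∑ i, ∑ j ∈ Finset.Icc 1 (τ i), (c i j : ℝ)) ≤ ∑ i, (τ i : ℝ) * (h i : ℝ) := by
    refine Finset.sum_le_sum fun i _ => ?_
    calc ∑ j ∈ Finset.Icc 1 (τ i), (c i j : ℝ)
        ≤ ∑ j ∈ Finset.Icc 1 (τ i), (h i : ℝ) := by
          refine Finset.sum_le_sum fun j _ => ?_
          exact_mod_cast hc i j
      _ = (τ i : ℝ) * (h i : ℝ) := by
          rw [Finset.sum_const, Nat.card_Icc]
          simp [mul_comm]
  exact hle.trans (hK.1 hmem)
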